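/- arXiv:1904.00218 — 2 statements merged into one kernel-verified Lean document; each statement's English description precedes it below -/
import Mathlib

section
/- Consider the hybrid setup, with λ_min > 0 and M := max(1−δ, e^{−λ_min}) ∈ (0,1). Assume M + μ*·𝓛 < 1 and that there exists a constant C such that for all n ≥ 0 and all t ∈ [a_n, b_n], ∑_{j=0}^{n−1}(𝓛·M^{−1}·(b_j−a_j) + (ln M)·∫_{a_j}^{b_j} γ(s) ds) + 𝓛·M^{−1}·(t−a_n) + (ln M)·∫_{a_n}^{t} γ(s) ds ≤ C. Then ‖ε_n(t)‖ ≤ ‖ε_0(a_0)‖·e^{C}·(M + μ*·𝓛)^n for all n ≥ 0 and t ∈ [a_n, b_n], and consequently sup_{t ∈ [a_n,b_n]} ‖ε_n(t)‖ → 0 as n → ∞. -/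
open RealInnerProductSpace




lemma aux_clm_basis {N : ℕ} {B : Matrix (Fin N) (Fin N) ℝ} (hB : B.IsHermitian) (i : Fin N) :
    Matrix.toEuclideanCLM (𝕜 := ℝ) (n := Fin N) B (hB.eigenvectorBasis i) =
      hB.eigenvalues i • hB.eigenvectorBasis i := by
  apply (WithLp.equiv 2 (Fin N → ℝ)).injective
  rw [WithLp.equiv_apply, Matrix.ofLp_toEuclideanCLM]
  simpa using hB.mulVec_eigenvectorBasis i

lemma aux_expand {N : ℕ} {B : Matrix (Fin N) (Fin N) ℝ} (hB : B.IsHermitian)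
    (v : EuclideanSpace ℝ (Fin N)) :
    Matrix.toEuclideanCLM (𝕜 := ℝ) (n := Fin N) B v =
      ∑ i, (hB.eigenvalues i * ⟪hB.eigenvectorBasis i, v⟫) • hB.eigenvectorBasis i := by
  conv_lhs => rw [← hB.eigenvectorBasis.sum_repr' v]
  rw [map_sum]
  refine Finset.sum_congr rfl fun i _ => ?_
  rw [map_smul, aux_clm_basis hB i, smul_smul, mul_comm]

lemma aux_normsq {N : ℕ} {B : Matrix (Fin N) (Fin N) ℝ} (hB : B.IsHermitian)
    (v : EuclideanSpace ℝ (Fin N)) :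
    ‖v‖ ^ 2 = ∑ i, ⟪hB.eigenvectorBasis i, v⟫ ^ 2 := by
  rw [← real_inner_self_eq_norm_sq]
  nth_rewrite 2 [← hB.eigenvectorBasis.sum_repr' v]
  nth_rewrite 1 [← hB.eigenvectorBasis.sum_repr' v]
  rw [hB.eigenvectorBasis.orthonormal.inner_sum]
  simp [sq]

lemma aux_quad {N : ℕ} {B : Matrix (Fin N) (Fin N) ℝ} (hB : B.IsHermitian)
    (lmin : ℝ) (hmin : ∀ i, lmin ≤ hB.eigenvalues i) (v : EuclideanSpace ℝ (Fin N)) :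
    lmin * ‖v‖ ^ 2 ≤ ⟪Matrix.toEuclideanCLM (𝕜 := ℝ) (n := Fin N) B v, v⟫ := by
  have h1 : ⟪Matrix.toEuclideanCLM (𝕜 := ℝ) (n := Fin N) B v, v⟫
      = ∑ i, hB.eigenvalues i * ⟪hB.eigenvectorBasis i, v⟫ ^ 2 := by
    rw [aux_expand hB v]
    nth_rewrite 2 [← hB.eigenvectorBasis.sum_repr' v]
    rw [hB.eigenvectorBasis.orthonormal.inner_sum]
    simp [sq, mul_assoc]
  rw [h1, aux_normsq hB v, Finset.mul_sum]
  exact Finset.sum_le_sum fun i _ => mul_le_mul_of_nonneg_right (hmin i) (sq_nonneg _)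

lemma aux_jump {N : ℕ} {B : Matrix (Fin N) (Fin N) ℝ} (hB : B.IsHermitian)
    (c M : ℝ) (hM : 0 ≤ M) (hc : ∀ i, |1 - c * hB.eigenvalues i| ≤ M)
    (v : EuclideanSpace ℝ (Fin N)) :
    ‖Matrix.toEuclideanCLM (𝕜 := ℝ) (n := Fin N) (1 - c • B) v‖ ≤ M * ‖v‖ := by
  have hw : Matrix.toEuclideanCLM (𝕜 := ℝ) (n := Fin N) (1 - c • B) v
      = ∑ i, ((1 - c * hB.eigenvalues i) * ⟪hB.eigenvectorBasis i, v⟫) • hB.eigenvectorBasis i := by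
    rw [map_sub, map_smul, map_one, ContinuousLinearMap.sub_apply,
      ContinuousLinearMap.smul_apply, ContinuousLinearMap.one_apply, aux_expand hB v,
      Finset.smul_sum]
    nth_rewrite 1 [← hB.eigenvectorBasis.sum_repr' v]
    rw [← Finset.sum_sub_distrib]
    refine Finset.sum_congr rfl fun i _ => ?_
    rw [smul_smul, ← sub_smul]
    congr 1
    ring
  have hsq : ‖Matrix.toEuclideanCLM (𝕜 := ℝ) (n := Fin N) (1 - c • B) v‖ ^ 2
      ≤ (M * ‖v‖) ^ 2 := by
    rw [← real_inner_self_eq_norm_sq, hw, hB.eigenvectorBasis.orthonormal.inner_sum]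
    have h3 : (M * ‖v‖) ^ 2 = ∑ i, M ^ 2 * ⟪hB.eigenvectorBasis i, v⟫ ^ 2 := by
      rw [← Finset.mul_sum, ← aux_normsq hB v]; ring
    rw [h3]
    refine Finset.sum_le_sum fun i _ => ?_
    have h2 : (1 - c * hB.eigenvalues i) ^ 2 ≤ M ^ 2 := by
      have := hc i
      nlinarith [abs_nonneg (1 - c * hB.eigenvalues i), sq_abs (1 - c * hB.eigenvalues i)]
    simp only [starRingEnd_apply, star_trivial]
    nlinarith [sq_nonneg (⟪hB.eigenvectorBasis i, v⟫ : ℝ)]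
  have h := Real.sqrt_le_sqrt hsq
  rwa [Real.sqrt_sq (norm_nonneg _), Real.sqrt_sq (by positivity)] at h


lemma gronwall_interval {E : Type*} [NormedAddCommGroup E] [InnerProductSpace ℝ E]
    (T : E →L[ℝ] E) (lmin L : ℝ) (hT : ∀ v, lmin * ‖v‖ ^ 2 ≤ ⟪T v, v⟫)
    (γ : ℝ → ℝ) (hγc : Continuous γ) (hγ0 : ∀ s, 0 ≤ γ s)
    (a b : ℝ) (ε gf : ℝ → E)
    (hode : ∀ t ∈ Set.Icc a b, HasDerivAt ε (-(γ t) • T (ε t) + gf t) t)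
    (hg : ∀ t ∈ Set.Icc a b, ‖gf t‖ ≤ L * ‖ε t‖)
    (t : ℝ) (ht : t ∈ Set.Icc a b) :
    ‖ε t‖ ≤ ‖ε a‖ * Real.exp (L * (t - a) - lmin * ∫ s in a..t, γ s) := by
  have hab : a ≤ b := le_trans ht.1 ht.2
  set F : ℝ → ℝ := fun u => ∫ s in a..u, (L - lmin * γ s) with hF
  have hγc' : Continuous fun s => L - lmin * γ s := by continuity
  have hFd : ∀ u, HasDerivAt F (L - lmin * γ u) u := fun u =>
    (hγc'.integral_hasStrictDerivAt a u).hasDerivAt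
  set φ : ℝ → ℝ := fun u => Real.exp (-2 * F u) * ‖ε u‖ ^ 2 with hφ
  have hφd : ∀ u ∈ Set.Icc a b, HasDerivAt φ
      (Real.exp (-2 * F u) * (-2 * (L - lmin * γ u)) * ‖ε u‖ ^ 2
        + Real.exp (-2 * F u) * (⟪ε u, -(γ u) • T (ε u) + gf u⟫ + ⟪-(γ u) • T (ε u) + gf u, ε u⟫))
      u := by
    intro u hu
    have h1 : HasDerivAt (fun x => Real.exp (-2 * F x))
        (Real.exp (-2 * F u) * (-2 * (L - lmin * γ u))) u :=
      (((hFd u).const_mul (-2)).exp)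
    have h2 : HasDerivAt (fun x => ‖ε x‖ ^ 2)
        (⟪ε u, -(γ u) • T (ε u) + gf u⟫ + ⟪-(γ u) • T (ε u) + gf u, ε u⟫) u := by
      have := (hode u hu).inner ℝ (hode u hu)
      simpa [real_inner_self_eq_norm_sq] using this
    exact h1.mul h2
  have hφanti : AntitoneOn φ (Set.Icc a b) := by
    apply antitoneOn_of_deriv_nonpos (convex_Icc a b)
    · intro u hu
      exact ((hφd u hu).continuousAt).continuousWithinAt
    · intro u hu
      rw [interior_Icc] at hu
      exact ((hφd u (Set.mem_Icc_of_Ioo hu)).differentiableAt).differentiableWithinAt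
    · intro u hu
      rw [interior_Icc] at hu
      have hu' := Set.mem_Icc_of_Ioo hu
      rw [(hφd u hu').deriv]
      have hin : ⟪-(γ u) • T (ε u) + gf u, ε u⟫ ≤ -(γ u) * (lmin * ‖ε u‖ ^ 2) + L * ‖ε u‖ ^ 2 := by
        rw [inner_add_left, inner_smul_left]
        have hC : ⟪gf u, ε u⟫ ≤ L * ‖ε u‖ ^ 2 := by
          calc ⟪gf u, ε u⟫ ≤ ‖gf u‖ * ‖ε u‖ := real_inner_le_norm _ _
            _ ≤ (L * ‖ε u‖) * ‖ε u‖ :=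
              mul_le_mul_of_nonneg_right (hg u hu') (norm_nonneg _)
            _ = L * ‖ε u‖ ^ 2 := by ring
        have hB := hT (ε u)
        have hγu := hγ0 u
        have := mul_le_mul_of_nonneg_left hB hγu
        simp only [starRingEnd_apply, star_trivial]
        nlinarith
      have hin2 : ⟪ε u, -(γ u) • T (ε u) + gf u⟫ ≤ -(γ u) * (lmin * ‖ε u‖ ^ 2) + L * ‖ε u‖ ^ 2 := by
        rw [real_inner_comm]; exact hin
      have hexp := Real.exp_pos (-2 * F u)
      nlinarith [sq_nonneg ‖ε u‖, mul_le_mul_of_nonneg_left hin hexp.le,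
        mul_le_mul_of_nonneg_left hin2 hexp.le]
  have hFa : F a = 0 := intervalIntegral.integral_same
  have hle : φ t ≤ φ a := hφanti (Set.left_mem_Icc.2 hab) ht ht.1
  have hφa : φ a = ‖ε a‖ ^ 2 := by simp [hφ, hFa]
  have hFt : F t = L * (t - a) - lmin * ∫ s in a..t, γ s := by
    have : F t = ∫ s in a..t, (L - lmin * γ s) := rfl
    rw [this, intervalIntegral.integral_sub (intervalIntegrable_const)
        ((hγc.intervalIntegrable a t).const_mul lmin),
      intervalIntegral.integral_const, intervalIntegral.integral_const_mul]
    simp [smul_eq_mul, mul_comm]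
  have h5 : Real.exp (-2 * F t) * ‖ε t‖ ^ 2 ≤ ‖ε a‖ ^ 2 := hφa ▸ hle
  have e2 : Real.exp (-2 * F t) * Real.exp (F t) ^ 2 = 1 := by
    rw [sq, ← Real.exp_add, ← Real.exp_add, show -2 * F t + (F t + F t) = 0 by ring, Real.exp_zero]
  have e3 : ‖ε t‖ ^ 2 * (Real.exp (-2 * F t) * Real.exp (F t) ^ 2) = ‖ε t‖ ^ 2 := by
    rw [e2, mul_one]
  have key : ‖ε t‖ ^ 2 ≤ (‖ε a‖ * Real.exp (F t)) ^ 2 := by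
    have h7 := mul_le_mul_of_nonneg_right h5 (sq_nonneg (Real.exp (F t)))
    nlinarith [h7, e3]
  have h6 := Real.sqrt_le_sqrt key
  rw [Real.sqrt_sq (norm_nonneg _), Real.sqrt_sq (by positivity)] at h6
  rwa [hFt] at h6






/-- hybrid setup (see statement 11) with `λmin > 0`,
`M = max (1-δ) e^{-λmin} ∈ (0,1)`, `M + μ* 𝓛 < 1`, and a constant `C` bounding
`∑_{j<n} (𝓛 M⁻¹ (b_j - a_j) + (ln M) ∫_{a_j}^{b_j} γ) + 𝓛 M⁻¹ (t - a_n)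
 + (ln M) ∫_{a_n}^t γ ≤ C` for all `n` and `t ∈ [a_n, b_n]`.  Then
`‖ε_n(t)‖ ≤ ‖ε_0(a_0)‖ e^C (M + μ* 𝓛)^n` for all such `n, t`, and consequently
`sup_{t ∈ [a_n, b_n]} ‖ε_n(t)‖ → 0` as `n → ∞`. -/
theorem stmt12 {N : ℕ} (hN : 0 < N) (B : Matrix (Fin N) (Fin N) ℝ)
    (hB : B.IsHermitian) (lmin : ℝ)
    (hmin_le : ∀ i, lmin ≤ hB.eigenvalues i)
    (hmin_mem : ∃ i, hB.eigenvalues i = lmin)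
    (hlmin_pos : 0 < lmin)
    (a b : ℕ → ℝ) (hab : ∀ j, a j ≤ b j) (hba : ∀ j, b j < a (j + 1))
    (μ : ℕ → ℝ) (hμdef : ∀ j, μ j = a (j + 1) - b j)
    (μstar : ℝ) (hμstar : 0 < μstar) (hμle : ∀ j, μ j ≤ μstar)
    (γ : ℝ → ℝ) (hγc : Continuous γ) (hγ0 : ∀ t, 0 ≤ γ t)
    (δ : ℝ) (hδ0 : 0 < δ) (hδ1 : δ < 1)
    (L : ℝ) (hL : 0 < L)
    (γd : ℕ → ℝ)
    (hγd : ∀ j i, δ ≤ μ j * γd j * hB.eigenvalues i ∧ μ j * γd j * hB.eigenvalues i < 1)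
    (ε g : ℕ → ℝ → EuclideanSpace ℝ (Fin N))
    (hode : ∀ j, ∀ t ∈ Set.Icc (a j) (b j),
      HasDerivAt (ε j)
        (-(γ t) • (Matrix.toEuclideanCLM (𝕜 := ℝ) (n := Fin N) B (ε j t)) + g j t) t)
    (hg : ∀ j, ∀ t ∈ Set.Icc (a j) (b j), ‖g j t‖ ≤ L * ‖ε j t‖)
    (h : ℕ → EuclideanSpace ℝ (Fin N))
    (hjump : ∀ j, ε (j + 1) (a (j + 1)) =
      Matrix.toEuclideanCLM (𝕜 := ℝ) (n := Fin N) (1 - (μ j * γd j) • B) (ε j (b j))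
        + μ j • h j)
    (hh : ∀ j, ‖h j‖ ≤ L * ‖ε j (b j)‖)
    (M : ℝ) (hM : M = max (1 - δ) (Real.exp (-lmin)))
    (hM1 : M + μstar * L < 1)
    (C : ℝ)
    (hC : ∀ n, ∀ t ∈ Set.Icc (a n) (b n),
      (∑ j ∈ Finset.range n,
          (L * M⁻¹ * (b j - a j) + Real.log M * ∫ s in (a j)..(b j), γ s))
        + L * M⁻¹ * (t - a n) + Real.log M * ∫ s in (a n)..t, γ s ≤ C) :
    (∀ n, ∀ t ∈ Set.Icc (a n) (b n),
      ‖ε n t‖ ≤ ‖ε 0 (a 0)‖ * Real.exp C * (M + μstar * L) ^ n) ∧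
    Filter.Tendsto (fun n => ⨆ t ∈ Set.Icc (a n) (b n), ‖ε n t‖)
      Filter.atTop (nhds 0) := by
  have hM0 : 0 < M := lt_of_lt_of_le (Real.exp_pos (-lmin)) (hM ▸ le_max_right _ _)
  have hMlt1 : M < 1 := by
    rw [hM]
    exact max_lt (by linarith) (by rw [Real.exp_lt_one_iff]; linarith)
  have hlogM : -lmin ≤ Real.log M := by
    rw [Real.le_log_iff_exp_le hM0, hM]; exact le_max_right _ _
  have hMinv : (1:ℝ) ≤ M⁻¹ := by
    have h1 := mul_inv_cancel₀ hM0.ne'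
    nlinarith [inv_nonneg.mpr hM0.le, hMlt1.le]
  set r := M + μstar * L with hr
  have hr0 : 0 < r := by positivity
  set T := Matrix.toEuclideanCLM (𝕜 := ℝ) (n := Fin N) B with hTdef
  have hT : ∀ v : EuclideanSpace ℝ (Fin N), lmin * ‖v‖ ^ 2 ≤ ⟪T v, v⟫ :=
    aux_quad hB lmin hmin_le
  have hint : ∀ n, ∀ t ∈ Set.Icc (a n) (b n),
      ‖ε n t‖ ≤ ‖ε n (a n)‖ *
        Real.exp (L * M⁻¹ * (t - a n) + Real.log M * ∫ s in (a n)..t, γ s) := by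
    intro n t ht
    have h1 := gronwall_interval T lmin L hT γ hγc hγ0 (a n) (b n) (ε n) (g n)
      (hode n) (hg n) t ht
    refine h1.trans (mul_le_mul_of_nonneg_left (Real.exp_le_exp.mpr ?_) (norm_nonneg _))
    have hγint : 0 ≤ ∫ s in (a n)..t, γ s :=
      intervalIntegral.integral_nonneg ht.1 (fun s _ => hγ0 s)
    have hLM : L ≤ L * M⁻¹ := by nlinarith
    have h2 : L * (t - a n) ≤ L * M⁻¹ * (t - a n) :=
      mul_le_mul_of_nonneg_right hLM (by linarith [ht.1])
    have h3 : -lmin * ∫ s in (a n)..t, γ s ≤ Real.log M * ∫ s in (a n)..t, γ s :=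
      mul_le_mul_of_nonneg_right hlogM hγint
    linarith
  have hμ0 : ∀ j, 0 < μ j := fun j => by rw [hμdef j]; linarith [hba j]
  have hjumpest : ∀ n, ‖ε (n + 1) (a (n + 1))‖ ≤ r * ‖ε n (b n)‖ := by
    intro n
    rw [hjump n]
    have habs : ∀ i, |1 - (μ n * γd n) * hB.eigenvalues i| ≤ M := by
      intro i
      have h1 := (hγd n i).1
      have h2 := (hγd n i).2
      rw [abs_le]
      constructor
      · nlinarith
      · have h3 := le_max_left (1 - δ) (Real.exp (-lmin))
        rw [← hM] at h3
        linarith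
    have hA := aux_jump hB (μ n * γd n) M hM0.le habs (ε n (b n))
    have hBn : ‖μ n • h n‖ ≤ μ n * (L * ‖ε n (b n)‖) := by
      rw [norm_smul, Real.norm_eq_abs, abs_of_pos (hμ0 n)]
      exact mul_le_mul_of_nonneg_left (hh n) (hμ0 n).le
    have htri := norm_add_le
      (Matrix.toEuclideanCLM (𝕜 := ℝ) (n := Fin N) (1 - (μ n * γd n) • B) (ε n (b n)))
      (μ n • h n)
    have hμn := hμle n
    have hμp := hμ0 n
    nlinarith [norm_nonneg (ε n (b n)), mul_nonneg hL.le (norm_nonneg (ε n (b n)))]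
  set P : ℕ → ℝ := fun n => ∑ j ∈ Finset.range n,
    (L * M⁻¹ * (b j - a j) + Real.log M * ∫ s in (a j)..(b j), γ s) with hP
  have claim : ∀ n, ‖ε n (a n)‖ ≤ ‖ε 0 (a 0)‖ * Real.exp (P n) * r ^ n := by
    intro n
    induction n with
    | zero => simp [hP]
    | succ n ih =>
      have hbn : b n ∈ Set.Icc (a n) (b n) := Set.right_mem_Icc.2 (hab n)
      have e2 := hint n (b n) hbn
      set Q := L * M⁻¹ * (b n - a n) + Real.log M * ∫ s in (a n)..(b n), γ s with hQ
      calc ‖ε (n + 1) (a (n + 1))‖ ≤ r * ‖ε n (b n)‖ := hjumpest n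
        _ ≤ r * (‖ε n (a n)‖ * Real.exp Q) := mul_le_mul_of_nonneg_left e2 hr0.le
        _ ≤ r * ((‖ε 0 (a 0)‖ * Real.exp (P n) * r ^ n) * Real.exp Q) :=
            mul_le_mul_of_nonneg_left
              (mul_le_mul_of_nonneg_right ih (Real.exp_pos Q).le) hr0.le
        _ = ‖ε 0 (a 0)‖ * Real.exp (P (n + 1)) * r ^ (n + 1) := by
            have hPn : P (n + 1) = P n + Q := Finset.sum_range_succ _ n
            conv_rhs => rw [hPn, Real.exp_add, pow_succ]
            ring
  have main : ∀ n, ∀ t ∈ Set.Icc (a n) (b n),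
      ‖ε n t‖ ≤ ‖ε 0 (a 0)‖ * Real.exp C * r ^ n := by
    intro n t ht
    have e2 := hint n t ht
    set Q := L * M⁻¹ * (t - a n) + Real.log M * ∫ s in (a n)..t, γ s with hQ
    have hPQ : P n + Q ≤ C := by
      have := hC n t ht
      rw [hQ, hP]
      linarith
    calc ‖ε n t‖ ≤ ‖ε n (a n)‖ * Real.exp Q := e2
      _ ≤ (‖ε 0 (a 0)‖ * Real.exp (P n) * r ^ n) * Real.exp Q :=
          mul_le_mul_of_nonneg_right (claim n) (Real.exp_pos Q).le
      _ = ‖ε 0 (a 0)‖ * Real.exp (P n + Q) * r ^ n := by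
          conv_rhs => rw [Real.exp_add]
          ring
      _ ≤ ‖ε 0 (a 0)‖ * Real.exp C * r ^ n :=
          mul_le_mul_of_nonneg_right
            (mul_le_mul_of_nonneg_left (Real.exp_le_exp.mpr hPQ) (norm_nonneg _))
            (pow_nonneg hr0.le n)
  refine ⟨main, ?_⟩
  apply squeeze_zero (g := fun n => ‖ε 0 (a 0)‖ * Real.exp C * r ^ n)
  · intro n
    exact Real.iSup_nonneg fun t => Real.iSup_nonneg fun _ => norm_nonneg _
  · intro n
    exact Real.iSup_le (fun t => Real.iSup_le (fun ht => main n t ht) (by positivity))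
      (by positivity)
  · have h0 : Filter.Tendsto (fun n : ℕ => r ^ n) Filter.atTop (nhds 0) :=
      tendsto_pow_atTop_nhds_zero_of_lt_one hr0.le hM1
    have h1 := h0.const_mul (‖ε 0 (a 0)‖ * Real.exp C)
    simpa using h1
end

section
/- Consider the hybrid setup, with λ_min > 0 and M := max(1−δ, e^{−λ_min}) ∈ (0,1), where the feedback gain is constant: γ(t) ≡ γ₀ > 0 and γ_j = γ₀ for all j. Assume M + μ*·𝓛 < 1 and 𝓛·M^{−1} + γ₀·ln M < 0. Then for all n ≥ 0 and all t ∈ [a_n, b_n], ‖ε_n(t)‖ ≤ ‖ε_0(a_0)‖·exp((𝓛·M^{−1} + γ₀·ln M)·(∑_{j=0}^{n−1}(b_j−a_j) + (t−a_n)))·(M + μ*·𝓛)^n ≤ ‖ε_0(a_0)‖·(M + μ*·𝓛)^n, and consequently sup_{t ∈ [a_n,b_n]} ‖ε_n(t)‖ → 0 as n → ∞. -/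
open Matrix

lemma aux_UU {N : ℕ} (U : Matrix (Fin N) (Fin N) ℝ) (hU : Uᵀ * U = 1)
    (w w' : Fin N → ℝ) : (U *ᵥ w) ⬝ᵥ (U *ᵥ w') = w ⬝ᵥ w' := by
  rw [Matrix.dotProduct_mulVec, Matrix.vecMul_mulVec, hU, Matrix.vecMul_one]

lemma aux_spec {N : ℕ} {B : Matrix (Fin N) (Fin N) ℝ} (hB : B.IsHermitian) (x : Fin N → ℝ) :
    B *ᵥ x = (hB.eigenvectorUnitary : Matrix (Fin N) (Fin N) ℝ) *ᵥ
      (fun i => hB.eigenvalues i * ((star (hB.eigenvectorUnitary : Matrix (Fin N) (Fin N) ℝ)) *ᵥ x) i) := by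
  have h2 : (Matrix.diagonal (RCLike.ofReal ∘ hB.eigenvalues)) *ᵥ
      ((star (hB.eigenvectorUnitary : Matrix (Fin N) (Fin N) ℝ)) *ᵥ x)
      = (fun i => hB.eigenvalues i * ((star (hB.eigenvectorUnitary : Matrix (Fin N) (Fin N) ℝ)) *ᵥ x) i) := by
    funext i
    rw [Matrix.mulVec_diagonal]
    simp
  rw [← h2, Matrix.mulVec_mulVec, Matrix.mulVec_mulVec, ← Unitary.conjStarAlgAut_apply (S := ℝ), ← hB.spectral_theorem]

section
variable {N : ℕ} {B : Matrix (Fin N) (Fin N) ℝ} (hB : B.IsHermitian) (x : Fin N → ℝ)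

lemma aux_facts :
    ∃ y : Fin N → ℝ, x ⬝ᵥ x = ∑ i, (y i)^2 ∧
      x ⬝ᵥ (B *ᵥ x) = ∑ i, hB.eigenvalues i * (y i)^2 ∧
      ∀ c : ℝ, ((1 - c • B) *ᵥ x) ⬝ᵥ ((1 - c • B) *ᵥ x)
        = ∑ i, (1 - c * hB.eigenvalues i)^2 * (y i)^2 := by
  set U : Matrix (Fin N) (Fin N) ℝ := (hB.eigenvectorUnitary : Matrix (Fin N) (Fin N) ℝ) with hUdef
  have hsU : star U = Uᵀ := by
    rw [Matrix.star_eq_conjTranspose, Matrix.conjTranspose_eq_transpose_of_trivial]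
  have hU1 : Uᵀ * U = 1 := by rw [← hsU]; exact Unitary.coe_star_mul_self hB.eigenvectorUnitary
  have hU2 : U * Uᵀ = 1 := by rw [← hsU]; exact Unitary.coe_mul_star_self hB.eigenvectorUnitary
  set y : Fin N → ℝ := (star U) *ᵥ x with hy
  have hxy : x = U *ᵥ y := by
    rw [hy, hsU, Matrix.mulVec_mulVec, hU2, Matrix.one_mulVec]
  have hBx : B *ᵥ x = U *ᵥ (fun i => hB.eigenvalues i * y i) := aux_spec hB x
  refine ⟨y, ?_, ?_, ?_⟩
  · rw [hxy, aux_UU U hU1]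
    simp [dotProduct, sq]
  · rw [hBx]
    nth_rewrite 1 [hxy]
    rw [aux_UU U hU1]
    simp [dotProduct, sq]
    exact Finset.sum_congr rfl (fun i _ => by ring)
  · intro c
    have hAx : (1 - c • B) *ᵥ x = U *ᵥ (fun i => (1 - c * hB.eigenvalues i) * y i) := by
      rw [Matrix.sub_mulVec, Matrix.one_mulVec, Matrix.smul_mulVec, hBx]
      nth_rewrite 1 [hxy]
      rw [← Matrix.mulVec_smul, ← Matrix.mulVec_sub]
      have hv : (y - c • fun i => hB.eigenvalues i * y i)
          = fun i => (1 - c * hB.eigenvalues i) * y i := by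
        funext i
        simp only [Pi.sub_apply, Pi.smul_apply, smul_eq_mul]
        ring
      rw [hv]
    rw [hAx, aux_UU U hU1]
    simp [dotProduct, sq]
    exact Finset.sum_congr rfl (fun i _ => by ring)
end

lemma aux_clm {N : ℕ} (A : Matrix (Fin N) (Fin N) ℝ) (x : EuclideanSpace ℝ (Fin N)) :
    (fun i => (Matrix.toEuclideanCLM (𝕜 := ℝ) (n := Fin N) A x) i) = A *ᵥ (fun i => x i) := by
  funext i
  exact congrFun (Matrix.ofLp_toEuclideanCLM (𝕜 := ℝ) A x) i

lemma aux_inner {N : ℕ} (x z : EuclideanSpace ℝ (Fin N)) :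
    (inner ℝ x z : ℝ) = (fun i => x i) ⬝ᵥ (fun i => z i) := by
  rw [PiLp.inner_apply]
  simp [dotProduct, RCLike.inner_apply, mul_comm]

lemma aux_normsq_s14 {N : ℕ} (x : EuclideanSpace ℝ (Fin N)) :
    ‖x‖ ^ 2 = (fun i => x i) ⬝ᵥ (fun i => x i) := by
  rw [← real_inner_self_eq_norm_sq, aux_inner]

lemma rayleigh {N : ℕ} {B : Matrix (Fin N) (Fin N) ℝ} (hB : B.IsHermitian) {lmin : ℝ}
    (hmin_le : ∀ i, lmin ≤ hB.eigenvalues i) (x : EuclideanSpace ℝ (Fin N)) :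
    lmin * ‖x‖ ^ 2 ≤ inner ℝ x (Matrix.toEuclideanCLM (𝕜 := ℝ) (n := Fin N) B x) := by
  obtain ⟨y, h1, h2, _⟩ := aux_facts hB (fun i => x i)
  rw [aux_inner, aux_clm, h2, aux_normsq_s14, h1, Finset.mul_sum]
  exact Finset.sum_le_sum fun i _ => mul_le_mul_of_nonneg_right (hmin_le i) (sq_nonneg _)

lemma jump_norm {N : ℕ} {B : Matrix (Fin N) (Fin N) ℝ} (hB : B.IsHermitian) {c M : ℝ}
    (hM : 0 ≤ M) (hev : ∀ i, 0 ≤ 1 - c * hB.eigenvalues i ∧ 1 - c * hB.eigenvalues i ≤ M)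
    (x : EuclideanSpace ℝ (Fin N)) :
    ‖Matrix.toEuclideanCLM (𝕜 := ℝ) (n := Fin N) (1 - c • B) x‖ ≤ M * ‖x‖ := by
  obtain ⟨y, h1, _, h3⟩ := aux_facts hB (fun i => x i)
  have hsq : ‖Matrix.toEuclideanCLM (𝕜 := ℝ) (n := Fin N) (1 - c • B) x‖ ^ 2 ≤ (M * ‖x‖) ^ 2 := by
    rw [aux_normsq_s14, aux_clm, h3 c, mul_pow, aux_normsq_s14, h1, Finset.mul_sum]
    refine Finset.sum_le_sum fun i _ => mul_le_mul_of_nonneg_right ?_ (sq_nonneg _)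
    exact sq_le_sq' (by nlinarith [(hev i).1, (hev i).2]) (hev i).2
  exact (pow_le_pow_iff_left₀ (norm_nonneg _) (by positivity) two_ne_zero).mp hsq


lemma interval_bound {N : ℕ} {B : Matrix (Fin N) (Fin N) ℝ} (hB : B.IsHermitian) {lmin : ℝ}
    (hmin_le : ∀ i, lmin ≤ hB.eigenvalues i) {γ₀ L : ℝ} (hγ₀ : 0 ≤ γ₀) {a b : ℝ}
    {ε g : ℝ → EuclideanSpace ℝ (Fin N)}
    (hode : ∀ t ∈ Set.Icc a b, HasDerivAt ε
      (-γ₀ • (Matrix.toEuclideanCLM (𝕜 := ℝ) (n := Fin N) B (ε t)) + g t) t)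
    (hg : ∀ t ∈ Set.Icc a b, ‖g t‖ ≤ L * ‖ε t‖) :
    ∀ t ∈ Set.Icc a b, ‖ε t‖ ≤ ‖ε a‖ * Real.exp ((L - γ₀ * lmin) * (t - a)) := by
  set c : ℝ := L - γ₀ * lmin with hc
  set F : ℝ → ℝ := fun t => inner ℝ (ε t) (ε t) with hF
  set F' : ℝ → ℝ := fun t =>
    2 * inner ℝ (ε t) (-γ₀ • (Matrix.toEuclideanCLM (𝕜 := ℝ) (n := Fin N) B (ε t)) + g t) with hF'
  have hFnorm : ∀ t, F t = ‖ε t‖ ^ 2 := fun t => real_inner_self_eq_norm_sq _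
  have hFd : ∀ t ∈ Set.Icc a b, HasDerivAt F (F' t) t := by
    intro t ht
    have hd := hode t ht
    have h2 := HasDerivAt.inner (𝕜 := ℝ) hd hd
    refine h2.congr_deriv (Eq.symm ?_)
    simp only [hF']
    ring_nf
    rw [real_inner_comm]
    ring
  have hcont : ContinuousOn F (Set.Icc a b) := fun t ht =>
    ((hFd t ht).continuousAt).continuousWithinAt
  have hbound : ∀ t ∈ Set.Ico a b, F' t ≤ (2 * c) * F t + 0 := by
    intro t ht
    have ht' := Set.Ico_subset_Icc_self ht
    have hray := rayleigh hB hmin_le (ε t)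
    have hcs : (inner ℝ (ε t) (g t) : ℝ) ≤ ‖ε t‖ * ‖g t‖ := real_inner_le_norm _ _
    have hgt := hg t ht'
    have hexp : F' t = 2 * (-γ₀ * inner ℝ (ε t) (Matrix.toEuclideanCLM (𝕜 := ℝ) (n := Fin N) B (ε t))
        + inner ℝ (ε t) (g t)) := by
      show 2 * (inner ℝ (ε t) (-γ₀ • (Matrix.toEuclideanCLM (𝕜 := ℝ) (n := Fin N) B (ε t)) + g t) : ℝ) = _
      rw [inner_add_right, real_inner_smul_right]
    rw [hexp, hFnorm]
    have hnn : (0:ℝ) ≤ ‖ε t‖ := norm_nonneg _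
    nlinarith [mul_le_mul_of_nonneg_left hray hγ₀]
  have := le_gronwallBound_of_liminf_deriv_right_le hcont
    (fun t ht r hr => ((hFd t (Set.Ico_subset_Icc_self ht)).hasDerivWithinAt.liminf_right_slope_le hr))
    (le_of_eq (by rw [hFnorm])) hbound
  intro t ht
  have h3 := this t ht
  rw [gronwallBound_ε0, hFnorm] at h3
  have h4 : (‖ε a‖ * Real.exp (c * (t - a))) ^ 2 = ‖ε a‖ ^ 2 * Real.exp (2 * c * (t - a)) := by
    rw [mul_pow, ← Real.exp_nat_mul]
    ring_nf
  refine (pow_le_pow_iff_left₀ (norm_nonneg _) (by positivity) two_ne_zero).mp ?_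
  rw [h4]
  exact h3

/-- hybrid setup with constant feedback gain `γ₀ > 0` (both on the
intervals and at the jumps), `λmin > 0`, `M = max (1-δ) e^{-λmin} ∈ (0,1)`,
`M + μ* 𝓛 < 1` and `𝓛 M⁻¹ + γ₀ ln M < 0`.  Then for all `n` and `t ∈ [a_n, b_n]`,
`‖ε_n(t)‖ ≤ ‖ε_0(a_0)‖ exp((𝓛 M⁻¹ + γ₀ ln M)(∑_{j<n}(b_j - a_j) + (t - a_n)))
  (M + μ* 𝓛)^n ≤ ‖ε_0(a_0)‖ (M + μ* 𝓛)^n`, and consequently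
`sup_{t ∈ [a_n, b_n]} ‖ε_n(t)‖ → 0` as `n → ∞`. -/
theorem stmt14 {N : ℕ} (hN : 0 < N) (B : Matrix (Fin N) (Fin N) ℝ)
    (hB : B.IsHermitian) (lmin : ℝ)
    (hmin_le : ∀ i, lmin ≤ hB.eigenvalues i)
    (hmin_mem : ∃ i, hB.eigenvalues i = lmin)
    (hlmin_pos : 0 < lmin)
    (a b : ℕ → ℝ) (hab : ∀ j, a j ≤ b j) (hba : ∀ j, b j < a (j + 1))
    (μ : ℕ → ℝ) (hμdef : ∀ j, μ j = a (j + 1) - b j)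
    (μstar : ℝ) (hμstar : 0 < μstar) (hμle : ∀ j, μ j ≤ μstar)
    (γ₀ : ℝ) (hγ₀ : 0 < γ₀)
    (δ : ℝ) (hδ0 : 0 < δ) (hδ1 : δ < 1)
    (L : ℝ) (hL : 0 < L)
    (hγd : ∀ j i, δ ≤ μ j * γ₀ * hB.eigenvalues i ∧ μ j * γ₀ * hB.eigenvalues i < 1)
    (ε g : ℕ → ℝ → EuclideanSpace ℝ (Fin N))
    (hode : ∀ j, ∀ t ∈ Set.Icc (a j) (b j),
      HasDerivAt (ε j)
        (-γ₀ • (Matrix.toEuclideanCLM (𝕜 := ℝ) (n := Fin N) B (ε j t)) + g j t) t)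
    (hg : ∀ j, ∀ t ∈ Set.Icc (a j) (b j), ‖g j t‖ ≤ L * ‖ε j t‖)
    (h : ℕ → EuclideanSpace ℝ (Fin N))
    (hjump : ∀ j, ε (j + 1) (a (j + 1)) =
      Matrix.toEuclideanCLM (𝕜 := ℝ) (n := Fin N) (1 - (μ j * γ₀) • B) (ε j (b j))
        + μ j • h j)
    (hh : ∀ j, ‖h j‖ ≤ L * ‖ε j (b j)‖)
    (M : ℝ) (hM : M = max (1 - δ) (Real.exp (-lmin)))
    (hM1 : M + μstar * L < 1)
    (hneg : L * M⁻¹ + γ₀ * Real.log M < 0) :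
    (∀ n, ∀ t ∈ Set.Icc (a n) (b n),
      ‖ε n t‖ ≤ ‖ε 0 (a 0)‖
          * Real.exp ((L * M⁻¹ + γ₀ * Real.log M)
              * ((∑ j ∈ Finset.range n, (b j - a j)) + (t - a n)))
          * (M + μstar * L) ^ n ∧
      ‖ε 0 (a 0)‖
          * Real.exp ((L * M⁻¹ + γ₀ * Real.log M)
              * ((∑ j ∈ Finset.range n, (b j - a j)) + (t - a n)))
          * (M + μstar * L) ^ n ≤ ‖ε 0 (a 0)‖ * (M + μstar * L) ^ n) ∧
    Filter.Tendsto (fun n => ⨆ t ∈ Set.Icc (a n) (b n), ‖ε n t‖)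
      Filter.atTop (nhds 0) := by
  -- main proof
  have hMpos : 0 < M := lt_of_lt_of_le (Real.exp_pos _) (hM ▸ le_max_right _ _)
  have hML : 0 < μstar * L := mul_pos hμstar hL
  have hMlt1 : M < 1 := by linarith
  have hr0 : (0:ℝ) ≤ M + μstar * L := by linarith
  set C : ℝ := L * M⁻¹ + γ₀ * Real.log M with hC
  set c : ℝ := L - γ₀ * lmin with hc
  have hMinv : 1 ≤ M⁻¹ := by
    rw [le_inv_comm₀ one_pos hMpos]
    simpa using hMlt1.le
  have hlogM : -lmin ≤ Real.log M := by
    have h1 : Real.exp (-lmin) ≤ M := hM ▸ le_max_right _ _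
    have := Real.log_le_log (Real.exp_pos _) h1
    rwa [Real.log_exp] at this
  have hcC : c ≤ C := by
    have h1 : L ≤ L * M⁻¹ := by nlinarith
    have h2 : γ₀ * (-lmin) ≤ γ₀ * Real.log M := mul_le_mul_of_nonneg_left hlogM hγ₀.le
    rw [hc, hC]; nlinarith
  -- interval estimate
  have hstep1 : ∀ n, ∀ t ∈ Set.Icc (a n) (b n),
      ‖ε n t‖ ≤ ‖ε n (a n)‖ * Real.exp (C * (t - a n)) := by
    intro n t ht
    refine (interval_bound hB hmin_le hγ₀.le (hode n) (hg n) t ht).trans ?_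
    have : c * (t - a n) ≤ C * (t - a n) :=
      mul_le_mul_of_nonneg_right hcC (by linarith [ht.1])
    exact mul_le_mul_of_nonneg_left (Real.exp_le_exp.mpr this) (norm_nonneg _)
  -- jump estimate
  have hμpos : ∀ j, 0 ≤ μ j := fun j => by
    rw [hμdef j]; linarith [hba j]
  have hstep2 : ∀ n, ‖ε (n + 1) (a (n + 1))‖ ≤ (M + μstar * L) * ‖ε n (b n)‖ := by
    intro n
    rw [hjump n]
    refine (norm_add_le _ _).trans ?_
    have h1 : ‖Matrix.toEuclideanCLM (𝕜 := ℝ) (n := Fin N) (1 - (μ n * γ₀) • B) (ε n (b n))‖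
        ≤ M * ‖ε n (b n)‖ := by
      refine jump_norm hB hMpos.le (fun i => ⟨?_, ?_⟩) _
      · linarith [(hγd n i).2]
      · have := (hγd n i).1
        have h2 : 1 - μ n * γ₀ * hB.eigenvalues i ≤ 1 - δ := by linarith
        exact h2.trans (hM ▸ le_max_left _ _)
    have h2 : ‖μ n • h n‖ ≤ μstar * (L * ‖ε n (b n)‖) := by
      rw [norm_smul, Real.norm_eq_abs, abs_of_nonneg (hμpos n)]
      have := hh n
      have hn0 : 0 ≤ L * ‖ε n (b n)‖ := by positivity
      calc μ n * ‖h n‖ ≤ μ n * (L * ‖ε n (b n)‖) :=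
            mul_le_mul_of_nonneg_left (hh n) (hμpos n)
        _ ≤ μstar * (L * ‖ε n (b n)‖) := mul_le_mul_of_nonneg_right (hμle n) hn0
    calc _ ≤ M * ‖ε n (b n)‖ + μstar * (L * ‖ε n (b n)‖) := add_le_add h1 h2
      _ = (M + μstar * L) * ‖ε n (b n)‖ := by ring
  -- induction on the start points
  have hkey : ∀ n, ‖ε n (a n)‖ ≤ ‖ε 0 (a 0)‖
      * Real.exp (C * (∑ j ∈ Finset.range n, (b j - a j))) * (M + μstar * L) ^ n := by
    intro n
    induction n with
    | zero => simp
    | succ n ih =>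
      have hbn : b n ∈ Set.Icc (a n) (b n) := ⟨hab n, le_refl _⟩
      have h1 : ‖ε n (b n)‖ ≤ ‖ε n (a n)‖ * Real.exp (C * (b n - a n)) := hstep1 n (b n) hbn
      have h2 := hstep2 n
      have h3 : ‖ε (n + 1) (a (n + 1))‖
          ≤ (M + μstar * L) * (‖ε n (a n)‖ * Real.exp (C * (b n - a n))) :=
        h2.trans (mul_le_mul_of_nonneg_left h1 hr0)
      have h4 : ‖ε n (a n)‖ * Real.exp (C * (b n - a n))
          ≤ (‖ε 0 (a 0)‖ * Real.exp (C * (∑ j ∈ Finset.range n, (b j - a j)))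
              * (M + μstar * L) ^ n) * Real.exp (C * (b n - a n)) :=
        mul_le_mul_of_nonneg_right ih (Real.exp_pos _).le
      refine h3.trans ((mul_le_mul_of_nonneg_left h4 hr0).trans (le_of_eq ?_))
      rw [Finset.sum_range_succ, mul_add, Real.exp_add, pow_succ]
      ring
  -- the two displayed inequalities
  have hmain : ∀ n, ∀ t ∈ Set.Icc (a n) (b n),
      ‖ε n t‖ ≤ ‖ε 0 (a 0)‖
          * Real.exp ((L * M⁻¹ + γ₀ * Real.log M)
              * ((∑ j ∈ Finset.range n, (b j - a j)) + (t - a n)))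
          * (M + μstar * L) ^ n ∧
      ‖ε 0 (a 0)‖
          * Real.exp ((L * M⁻¹ + γ₀ * Real.log M)
              * ((∑ j ∈ Finset.range n, (b j - a j)) + (t - a n)))
          * (M + μstar * L) ^ n ≤ ‖ε 0 (a 0)‖ * (M + μstar * L) ^ n := by
    intro n t ht
    constructor
    · have h1 := hstep1 n t ht
      have h2 : ‖ε n (a n)‖ * Real.exp (C * (t - a n))
          ≤ (‖ε 0 (a 0)‖ * Real.exp (C * (∑ j ∈ Finset.range n, (b j - a j)))
              * (M + μstar * L) ^ n) * Real.exp (C * (t - a n)) :=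
        mul_le_mul_of_nonneg_right (hkey n) (Real.exp_pos _).le
      refine h1.trans (h2.trans (le_of_eq ?_))
      rw [mul_add, Real.exp_add]
      ring
    · have hS : 0 ≤ (∑ j ∈ Finset.range n, (b j - a j)) + (t - a n) := by
        have h1 : 0 ≤ ∑ j ∈ Finset.range n, (b j - a j) :=
          Finset.sum_nonneg fun j _ => by linarith [hab j]
        linarith [ht.1]
      have hexp : Real.exp ((L * M⁻¹ + γ₀ * Real.log M)
          * ((∑ j ∈ Finset.range n, (b j - a j)) + (t - a n))) ≤ 1 := by
        rw [Real.exp_le_one_iff]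
        exact mul_nonpos_of_nonpos_of_nonneg hneg.le hS
      have h3 : 0 ≤ ‖ε 0 (a 0)‖ * (M + μstar * L) ^ n := by positivity
      calc _ = (‖ε 0 (a 0)‖ * (M + μstar * L) ^ n) * Real.exp ((L * M⁻¹ + γ₀ * Real.log M)
            * ((∑ j ∈ Finset.range n, (b j - a j)) + (t - a n))) := by ring
        _ ≤ (‖ε 0 (a 0)‖ * (M + μstar * L) ^ n) * 1 := mul_le_mul_of_nonneg_left hexp h3
        _ = ‖ε 0 (a 0)‖ * (M + μstar * L) ^ n := by ring
  refine ⟨hmain, ?_⟩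
  -- convergence of the sup
  have hbd : ∀ n, (⨆ t ∈ Set.Icc (a n) (b n), ‖ε n t‖) ≤ ‖ε 0 (a 0)‖ * (M + μstar * L) ^ n := by
    intro n
    have h3 : 0 ≤ ‖ε 0 (a 0)‖ * (M + μstar * L) ^ n := by positivity
    refine Real.iSup_le (fun t => Real.iSup_le (fun ht => ?_) h3) h3
    exact ((hmain n t ht).1).trans ((hmain n t ht).2)
  have hnn : ∀ n, 0 ≤ ⨆ t ∈ Set.Icc (a n) (b n), ‖ε n t‖ := fun n =>
    Real.iSup_nonneg fun t => Real.iSup_nonneg fun _ => norm_nonneg _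
  have htend : Filter.Tendsto (fun n => ‖ε 0 (a 0)‖ * (M + μstar * L) ^ n)
      Filter.atTop (nhds 0) := by
    have := (tendsto_pow_atTop_nhds_zero_of_lt_one hr0 hM1).const_mul ‖ε 0 (a 0)‖
    simpa using this
  exact squeeze_zero hnn hbd htend
end
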